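/- For α > 1 and all x, y ≥ 0, the Mittag-Leffler function satisfies E_α((x+y)^α) ≥ E_α(x^α) · E_α(y^α). -/

import Mathlib

noncomputable def mittagLeffler (α x : ℝ) : ℝ :=
  ∑' k : ℕ, x ^ k / Real.Gamma (α * k + 1)

open Real MeasureTheory intervalIntegral Finset

/-- Real Beta-convolution identity. -/
lemma conv_integral {a b x : ℝ} (ha : 0 < a) (hb : 0 < b) (hx : 0 < x) :
    ∫ s in (0:ℝ)..x, s ^ (a - 1) * (x - s) ^ (b - 1) =
      x ^ (a + b - 1) * (Real.Gamma a * Real.Gamma b / Real.Gamma (a + b)) := by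
  have hab : (0:ℝ) < Real.Gamma (a + b) := Real.Gamma_pos_of_pos (by linarith)
  have hβ : Complex.betaIntegral a b =
      ((Real.Gamma a * Real.Gamma b / Real.Gamma (a + b) : ℝ) : ℂ) := by
    have h := Complex.Gamma_mul_Gamma_eq_betaIntegral
      (s := (a:ℂ)) (t := (b:ℂ)) (by simpa using ha) (by simpa using hb)
    rw [← Complex.ofReal_add, Complex.Gamma_ofReal, Complex.Gamma_ofReal,
      Complex.Gamma_ofReal] at h
    have hne : ((Real.Gamma (a+b) : ℝ) : ℂ) ≠ 0 := by exact_mod_cast hab.ne'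
    push_cast
    rw [eq_div_iff hne, mul_comm, ← h]
  have hs := Complex.betaIntegral_scaled (a:ℂ) (b:ℂ) hx
  have hL : (∫ s in (0:ℝ)..x, ((s:ℂ)) ^ ((a:ℂ) - 1) * ((x:ℂ) - s) ^ ((b:ℂ) - 1)) =
      ((∫ s in (0:ℝ)..x, s ^ (a - 1) * (x - s) ^ (b - 1) : ℝ) : ℂ) := by
    rw [← intervalIntegral.integral_ofReal]
    rw [intervalIntegral.integral_of_le hx.le, intervalIntegral.integral_of_le hx.le]
    refine setIntegral_congr_fun measurableSet_Ioc fun s hs => ?_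
    have h1 : (0:ℝ) ≤ s := hs.1.le
    have h2 : (0:ℝ) ≤ x - s := by linarith [hs.2]
    push_cast
    rw [Complex.ofReal_cpow h1, Complex.ofReal_cpow h2]
    push_cast
    ring
  have hR : ((x:ℂ)) ^ ((a:ℂ) + b - 1) = ((x ^ (a + b - 1) : ℝ) : ℂ) := by
    rw [Complex.ofReal_cpow hx.le]
    push_cast
    ring_nf
  rw [hL, hR, hβ] at hs
  exact_mod_cast hs

lemma II1 {c d : ℝ} (hc : 0 ≤ c) (hd : 0 ≤ d) (u a b : ℝ) :
    IntervalIntegrable (fun s : ℝ => s ^ c * (u - s) ^ d) volume a b :=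
  (((Real.continuous_rpow_const hc).comp continuous_id).mul
    ((Real.continuous_rpow_const hd).comp (continuous_const.sub continuous_id))).intervalIntegrable _ _

lemma key_ineq {α : ℝ} (hα : 1 < α) {y : ℝ} (hy : 0 ≤ y) :
    ∀ (n : ℕ) {x : ℝ}, 0 ≤ x →
      ∑ p ∈ Finset.HasAntidiagonal.antidiagonal n,
        x ^ (α * p.1) / Real.Gamma (α * p.1 + 1) * (y ^ (α * p.2) / Real.Gamma (α * p.2 + 1))
        ≤ (x + y) ^ (α * n) / Real.Gamma (α * n + 1) := by
  have hα0 : (0:ℝ) < α := by linarith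
  have hα1 : (0:ℝ) ≤ α - 1 := by linarith
  have hΓ : ∀ c : ℝ, 0 ≤ c → 0 < Real.Gamma (c + 1) := fun c hc =>
    Real.Gamma_pos_of_pos (by linarith)
  have hΓα : 0 < Real.Gamma α := Real.Gamma_pos_of_pos hα0
  intro n
  induction n with
  | zero =>
    intro x hx
    simp [Real.Gamma_one]
  | succ n IH =>
    intro x hx
    have hcast : (((n:ℕ) + 1 : ℕ) : ℝ) = (n : ℝ) + 1 := by push_cast; ring
    have hA : (0:ℝ) ≤ α * n := mul_nonneg hα0.le (Nat.cast_nonneg _)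
    have hA1 : (0:ℝ) < α * n + 1 := by linarith
    rw [Finset.Nat.sum_antidiagonal_succ]
    rcases eq_or_lt_of_le hx with h0 | hxpos
    · -- x = 0
      rw [← h0]
      have hz : ∀ p ∈ Finset.HasAntidiagonal.antidiagonal n,
          (0:ℝ) ^ (α * ((p:ℕ×ℕ).1 + 1 : ℕ)) / Real.Gamma (α * ((p:ℕ×ℕ).1 + 1 : ℕ) + 1) *
            ((y:ℝ) ^ (α * (p:ℕ×ℕ).2) / Real.Gamma (α * (p:ℕ×ℕ).2 + 1)) = 0 := by
        intro p _
        have : (0:ℝ) ^ (α * ((p.1 + 1 : ℕ):ℝ)) = 0 := by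
          apply Real.zero_rpow
          have : (0:ℝ) < α * ((p.1 + 1 : ℕ):ℝ) := by
            apply mul_pos hα0
            exact_mod_cast Nat.succ_pos p.1
          exact this.ne'
        rw [this, zero_div, zero_mul]
      rw [Finset.sum_eq_zero hz, add_zero]
      simp [Real.Gamma_one]
    · -- 0 < x
      have hz : (0:ℝ) < x + y := by linarith
      have hΓA1 : (0:ℝ) < Real.Gamma (α * n + 1) := hΓ _ hA
      have hΓAα : (0:ℝ) < Real.Gamma (α * n + 1 + α) := Real.Gamma_pos_of_pos (by linarith)
      -- per-term integral representation
      have hterm : ∀ p ∈ Finset.HasAntidiagonal.antidiagonal n,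
          x ^ (α * ((p:ℕ×ℕ).1 + 1 : ℕ)) / Real.Gamma (α * ((p:ℕ×ℕ).1 + 1 : ℕ) + 1) *
            (y ^ (α * (p:ℕ×ℕ).2) / Real.Gamma (α * (p:ℕ×ℕ).2 + 1))
          = (Real.Gamma α)⁻¹ * ∫ s in (0:ℝ)..x,
              s ^ (α * (p:ℕ×ℕ).1) * (x - s) ^ (α - 1) *
                (y ^ (α * (p:ℕ×ℕ).2) /
                  (Real.Gamma (α * (p:ℕ×ℕ).1 + 1) * Real.Gamma (α * (p:ℕ×ℕ).2 + 1))) := by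
        intro p _
        have hp1 : (0:ℝ) ≤ α * p.1 := mul_nonneg hα0.le (Nat.cast_nonneg _)
        have hp2 : (0:ℝ) ≤ α * p.2 := mul_nonneg hα0.le (Nat.cast_nonneg _)
        have hconv := conv_integral (a := α * p.1 + 1) (b := α) (by linarith) hα0 hxpos
        rw [add_sub_cancel_right] at hconv
        rw [intervalIntegral.integral_mul_const, hconv]
        have e1 : α * ((p.1 + 1 : ℕ):ℝ) = α * p.1 + 1 + α - 1 := by push_cast; ring
        have e2 : α * ((p.1 + 1 : ℕ):ℝ) + 1 = α * p.1 + 1 + α := by push_cast; ring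
        rw [e2, e1]
        have h1 := hΓ _ hp1
        have h2 := hΓ _ hp2
        have h3 : (0:ℝ) < Real.Gamma (α * p.1 + 1 + α) := Real.Gamma_pos_of_pos (by linarith)
        field_simp
      -- pull the integral out of the sum
      have hsum : (∑ p ∈ Finset.HasAntidiagonal.antidiagonal n,
            x ^ (α * ((p:ℕ×ℕ).1 + 1 : ℕ)) / Real.Gamma (α * ((p:ℕ×ℕ).1 + 1 : ℕ) + 1) *
              (y ^ (α * (p:ℕ×ℕ).2) / Real.Gamma (α * (p:ℕ×ℕ).2 + 1)))
          = (Real.Gamma α)⁻¹ * ∫ s in (0:ℝ)..x, (x - s) ^ (α - 1) *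
              ∑ p ∈ Finset.HasAntidiagonal.antidiagonal n,
                s ^ (α * (p:ℕ×ℕ).1) / Real.Gamma (α * (p:ℕ×ℕ).1 + 1) *
                  (y ^ (α * (p:ℕ×ℕ).2) / Real.Gamma (α * (p:ℕ×ℕ).2 + 1)) := by
        rw [Finset.sum_congr rfl hterm, ← Finset.mul_sum]
        congr 1
        have hswap := intervalIntegral.integral_finset_sum (μ := volume) (a := (0:ℝ)) (b := x)
          (s := Finset.HasAntidiagonal.antidiagonal n) (f := fun (p : ℕ×ℕ) (s:ℝ) => s ^ (α * p.1) * (x - s) ^ (α - 1) *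
            (y ^ (α * p.2) / (Real.Gamma (α * p.1 + 1) * Real.Gamma (α * p.2 + 1))))
          (fun p _ => (II1 (mul_nonneg hα0.le (Nat.cast_nonneg _)) hα1 x 0 x).mul_const _)
        rw [← hswap]
        refine intervalIntegral.integral_congr fun s _ => ?_
        rw [Finset.mul_sum]
        exact Finset.sum_congr rfl fun p _ => by ring
      have contxs : Continuous fun s:ℝ => (x - s) ^ (α - 1) :=
        (Real.continuous_rpow_const hα1).comp (continuous_const.sub continuous_id)
      have contsum : Continuous fun s:ℝ => ∑ p ∈ Finset.HasAntidiagonal.antidiagonal n,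
          s ^ (α * (p:ℕ×ℕ).1) / Real.Gamma (α * (p:ℕ×ℕ).1 + 1) *
            (y ^ (α * (p:ℕ×ℕ).2) / Real.Gamma (α * (p:ℕ×ℕ).2 + 1)) :=
        continuous_finset_sum _ fun p _ =>
          ((Real.continuous_rpow_const (mul_nonneg hα0.le (Nat.cast_nonneg _))).div_const _).mul continuous_const
      have hmono : (∫ s in (0:ℝ)..x, (x - s) ^ (α - 1) *
              ∑ p ∈ Finset.HasAntidiagonal.antidiagonal n,
                s ^ (α * (p:ℕ×ℕ).1) / Real.Gamma (α * (p:ℕ×ℕ).1 + 1) *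
                  (y ^ (α * (p:ℕ×ℕ).2) / Real.Gamma (α * (p:ℕ×ℕ).2 + 1)))
          ≤ ∫ s in (0:ℝ)..x, (x - s) ^ (α - 1) *
              ((s + y) ^ (α * n) / Real.Gamma (α * n + 1)) := by
        apply intervalIntegral.integral_mono_on hx
        · exact (contxs.mul contsum).intervalIntegrable _ _
        · exact (contxs.mul (((Real.continuous_rpow_const hA).comp
            (continuous_id.add continuous_const)).div_const _)).intervalIntegrable _ _
        · intro s hs
          exact mul_le_mul_of_nonneg_left (IH hs.1) (Real.rpow_nonneg (by linarith [hs.2]) _)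
      -- substitution t = s + y
      have hsub : (∫ s in (0:ℝ)..x, (x - s) ^ (α - 1) *
              ((s + y) ^ (α * n) / Real.Gamma (α * n + 1)))
          = (Real.Gamma (α * n + 1))⁻¹ *
              ∫ t in y..(x + y), t ^ (α * n) * (x + y - t) ^ (α - 1) := by
        have e : ∀ s ∈ Set.uIcc (0:ℝ) x, (x - s) ^ (α - 1) *
            ((s + y) ^ (α * n) / Real.Gamma (α * n + 1))
            = (fun t => t ^ (α * n) * (x + y - t) ^ (α - 1) *
                (Real.Gamma (α * n + 1))⁻¹) (s + y) := by
          intro s _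
          show (x - s) ^ (α - 1) * ((s + y) ^ (α * n) / Real.Gamma (α * n + 1))
            = (s + y) ^ (α * n) * (x + y - (s + y)) ^ (α - 1) * (Real.Gamma (α * n + 1))⁻¹
          rw [show x + y - (s + y) = x - s by ring]
          ring
        rw [intervalIntegral.integral_congr e,
          intervalIntegral.integral_comp_add_right
            (fun t => t ^ (α * n) * (x + y - t) ^ (α - 1) * (Real.Gamma (α * n + 1))⁻¹) y,
          zero_add, intervalIntegral.integral_mul_const]
        ring
      -- evaluate the full integral and bound the initial piece
      have hIz := conv_integral (a := α * n + 1) (b := α) hA1 hα0 hz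
      rw [add_sub_cancel_right] at hIz
      have hsplit := intervalIntegral.integral_add_adjacent_intervals
        (a := (0:ℝ)) (b := y) (c := x + y)
        (f := fun t => t ^ (α * n) * (x + y - t) ^ (α - 1))
        (II1 hA hα1 (x + y) 0 y) (II1 hA hα1 (x + y) y (x + y))
      have hIy : y ^ (α * n + 1 + α - 1) *
            (Real.Gamma (α * n + 1) * Real.Gamma α / Real.Gamma (α * n + 1 + α))
          ≤ ∫ t in (0:ℝ)..y, t ^ (α * n) * (x + y - t) ^ (α - 1) := by
        rcases hy.eq_or_lt with h0y | hypos
        · rw [← h0y, intervalIntegral.integral_same,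
            Real.zero_rpow (by linarith : α * (n:ℝ) + 1 + α - 1 ≠ 0), zero_mul]
        · have hIy0 := conv_integral (a := α * n + 1) (b := α) hA1 hα0 hypos
          rw [add_sub_cancel_right] at hIy0
          rw [← hIy0]
          apply intervalIntegral.integral_mono_on hy (II1 hA hα1 y 0 y) (II1 hA hα1 (x + y) 0 y)
          intro t ht
          exact mul_le_mul_of_nonneg_left
            (Real.rpow_le_rpow (by linarith [ht.2]) (by linarith) hα1)
            (Real.rpow_nonneg ht.1 _)
      -- final assembly
      have ecast : α * ((n + 1 : ℕ):ℝ) = α * n + 1 + α - 1 := by push_cast; ring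
      have ecast2 : α * ((n + 1 : ℕ):ℝ) + 1 = α * n + 1 + α := by push_cast; ring
      have hterm0 : x ^ (α * ((0:ℕ):ℝ)) / Real.Gamma (α * ((0:ℕ):ℝ) + 1) = 1 := by
        simp [Real.Gamma_one]
      have h5 : (Real.Gamma α)⁻¹ * ((Real.Gamma (α * n + 1))⁻¹ *
            ∫ t in y..(x + y), t ^ (α * n) * (x + y - t) ^ (α - 1))
          ≤ ((x + y)  ^ (α * n + 1 + α - 1) - y  ^ (α * n + 1 + α - 1)) / Real.Gamma (α * n + 1 + α) := by
        have hIyz : (∫ t in y..(x + y), t ^ (α * n) * (x + y - t) ^ (α - 1))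
            ≤ (x + y)  ^ (α * n + 1 + α - 1) * (Real.Gamma (α * n + 1) * Real.Gamma α / Real.Gamma (α * n + 1 + α)) - y  ^ (α * n + 1 + α - 1) * (Real.Gamma (α * n + 1) * Real.Gamma α / Real.Gamma (α * n + 1 + α)) := by linarith
        calc (Real.Gamma α)⁻¹ * ((Real.Gamma (α * n + 1))⁻¹ *
              ∫ t in y..(x + y), t ^ (α * n) * (x + y - t) ^ (α - 1))
            ≤ (Real.Gamma α)⁻¹ * ((Real.Gamma (α * n + 1))⁻¹ *
              ((x + y)  ^ (α * n + 1 + α - 1) * (Real.Gamma (α * n + 1) * Real.Gamma α / Real.Gamma (α * n + 1 + α)) - y ^ (α * n + 1 + α - 1) * (Real.Gamma (α * n + 1) * Real.Gamma α / Real.Gamma (α * n + 1 + α)))) := by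
              refine mul_le_mul_of_nonneg_left
                (mul_le_mul_of_nonneg_left hIyz (inv_nonneg.mpr hΓA1.le))
                (inv_nonneg.mpr hΓα.le)
          _ = ((x + y) ^ (α * n + 1 + α - 1) - y ^ (α * n + 1 + α - 1)) / Real.Gamma (α * n + 1 + α) := by
              field_simp
      calc x ^ (α * ((0:ℕ):ℝ)) / Real.Gamma (α * ((0:ℕ):ℝ) + 1) *
              (y ^ (α * ((n + 1:ℕ):ℝ)) / Real.Gamma (α * ((n + 1:ℕ):ℝ) + 1)) +
            ∑ p ∈ Finset.HasAntidiagonal.antidiagonal n,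
              x ^ (α * ((p:ℕ×ℕ).1 + 1 : ℕ)) / Real.Gamma (α * ((p:ℕ×ℕ).1 + 1 : ℕ) + 1) *
                (y ^ (α * (p:ℕ×ℕ).2) / Real.Gamma (α * (p:ℕ×ℕ).2 + 1))
          = y  ^ (α * n + 1 + α - 1) / Real.Gamma (α * n + 1 + α) + (Real.Gamma α)⁻¹ * ∫ s in (0:ℝ)..x, (x - s) ^ (α - 1) *
              ∑ p ∈ Finset.HasAntidiagonal.antidiagonal n,
                s ^ (α * (p:ℕ×ℕ).1) / Real.Gamma (α * (p:ℕ×ℕ).1 + 1) *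
                  (y ^ (α * (p:ℕ×ℕ).2) / Real.Gamma (α * (p:ℕ×ℕ).2 + 1)) := by
            rw [hterm0, one_mul, hsum, ecast2, ecast]
        _ ≤ y  ^ (α * n + 1 + α - 1) / Real.Gamma (α * n + 1 + α) + (Real.Gamma α)⁻¹ * ∫ s in (0:ℝ)..x, (x - s) ^ (α - 1) *
              ((s + y) ^ (α * n) / Real.Gamma (α * n + 1)) := by
            exact add_le_add_right (mul_le_mul_of_nonneg_left hmono (inv_nonneg.mpr hΓα.le)) _
        _ = y  ^ (α * n + 1 + α - 1) / Real.Gamma (α * n + 1 + α) + (Real.Gamma α)⁻¹ * ((Real.Gamma (α * n + 1))⁻¹ *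
              ∫ t in y..(x + y), t ^ (α * n) * (x + y - t) ^ (α - 1)) := by rw [hsub]
        _ ≤ y  ^ (α * n + 1 + α - 1) / Real.Gamma (α * n + 1 + α) + ((x + y)  ^ (α * n + 1 + α - 1) - y  ^ (α * n + 1 + α - 1)) / Real.Gamma (α * n + 1 + α) := add_le_add_right h5 _
        _ = (x + y)  ^ (α * n + 1 + α - 1) / Real.Gamma (α * n + 1 + α) := by ring
        _ = (x + y) ^ (α * ((n + 1:ℕ):ℝ)) / Real.Gamma (α * ((n + 1:ℕ):ℝ) + 1) := by
            rw [ecast2, ecast]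

lemma summable_ml {α : ℝ} (hα : 1 < α) {z : ℝ} (hz : 0 ≤ z) :
    Summable (fun k : ℕ => z ^ k / Real.Gamma (α * k + 1)) := by
  have hα0 : (0:ℝ) < α := by linarith
  apply summable_of_ratio_norm_eventually_le (r := 1/2) (by norm_num)
  rw [Filter.eventually_atTop]
  refine ⟨max 1 ⌈2 * z⌉₊, fun k hk => ?_⟩
  have hk1 : 1 ≤ k := le_trans (le_max_left _ _) hk
  have hk1' : (1:ℝ) ≤ k := by exact_mod_cast hk1
  have hk2 : 2 * z ≤ k := le_trans (Nat.le_ceil _)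
    (by exact_mod_cast le_trans (le_max_right _ _) hk)
  have hkα : (k:ℝ) ≤ α * k := by nlinarith
  have hAk : (0:ℝ) ≤ α * k := by nlinarith
  have hαk1 : (2:ℝ) ≤ α * k + 1 := by nlinarith
  have hd : (0:ℝ) < α * k + α := by nlinarith
  have hΓk : (0:ℝ) < Real.Gamma (α * k + 1) := Real.Gamma_pos_of_pos (by linarith)
  have hΓkα : (0:ℝ) < Real.Gamma (α * k + α) := Real.Gamma_pos_of_pos (by linarith)
  have hmon : Real.Gamma (α * k + 1) ≤ Real.Gamma (α * k + α) :=
    (Real.Gamma_strictMonoOn_Ici hαk1 (by simp only [Set.mem_Ici]; nlinarith)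
      (by linarith)).le
  have heq : Real.Gamma (α * ((k + 1 : ℕ):ℝ) + 1) = (α * k + α) * Real.Gamma (α * k + α) := by
    rw [show α * ((k + 1 : ℕ):ℝ) + 1 = (α * k + α) + 1 by push_cast; ring]
    exact Real.Gamma_add_one hd.ne'
  have hΓk1 : (0:ℝ) < Real.Gamma (α * ((k + 1 : ℕ):ℝ) + 1) := by
    rw [heq]; exact mul_pos hd hΓkα
  rw [Real.norm_eq_abs, Real.norm_eq_abs,
    abs_of_nonneg (div_nonneg (pow_nonneg hz _) hΓk1.le),
    abs_of_nonneg (div_nonneg (pow_nonneg hz _) hΓk.le)]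
  calc z ^ (k + 1) / Real.Gamma (α * ((k + 1 : ℕ):ℝ) + 1)
      = (z * z ^ k) / ((α * k + α) * Real.Gamma (α * k + α)) := by
        rw [heq, pow_succ]; ring
    _ ≤ (z * z ^ k) / ((α * k + α) * Real.Gamma (α * k + 1)) := by
        apply div_le_div_of_nonneg_left (by positivity) (by positivity)
        exact mul_le_mul_of_nonneg_left hmon hd.le
    _ = (z / (α * k + α)) * (z ^ k / Real.Gamma (α * k + 1)) := (div_mul_div_comm _ _ _ _).symm
    _ ≤ (1/2) * (z ^ k / Real.Gamma (α * k + 1)) := by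
        apply mul_le_mul_of_nonneg_right _ (div_nonneg (pow_nonneg hz _) hΓk.le)
        rw [div_le_iff₀ hd]
        nlinarith

set_option maxHeartbeats 1000000 in
theorem mittagLeffler_superadd (α x y : ℝ) (hα : 1 < α)
    (hx : 0 ≤ x) (hy : 0 ≤ y) :
    mittagLeffler α (x ^ α) * mittagLeffler α (y ^ α) ≤ mittagLeffler α ((x + y) ^ α) := by
  have hα0 : (0:ℝ) < α := by linarith
  have hxy : (0:ℝ) ≤ x + y := by linarith
  have Sx := summable_ml hα (Real.rpow_nonneg hx α)
  have Sy := summable_ml hα (Real.rpow_nonneg hy α)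
  have Sz := summable_ml hα (Real.rpow_nonneg hxy α)
  have e : ∀ (t : ℝ), 0 ≤ t → ∀ m : ℕ, (t ^ α) ^ m = t ^ (α * (m:ℝ)) := by
    intro t ht m
    rw [← Real.rpow_natCast (t ^ α) m, ← Real.rpow_mul ht]
  have hpt : ∀ n : ℕ, (∑ p ∈ Finset.HasAntidiagonal.antidiagonal n,
      (x ^ α) ^ p.1 / Real.Gamma (α * p.1 + 1) * ((y ^ α) ^ p.2 / Real.Gamma (α * p.2 + 1)))
      ≤ ((x + y) ^ α) ^ n / Real.Gamma (α * n + 1) := by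
    intro n
    calc (∑ p ∈ Finset.HasAntidiagonal.antidiagonal n,
        (x ^ α) ^ p.1 / Real.Gamma (α * p.1 + 1) * ((y ^ α) ^ p.2 / Real.Gamma (α * p.2 + 1)))
        = ∑ p ∈ Finset.HasAntidiagonal.antidiagonal n,
            x ^ (α * p.1) / Real.Gamma (α * p.1 + 1) * (y ^ (α * p.2) / Real.Gamma (α * p.2 + 1)) := by
          refine Finset.sum_congr rfl fun p _ => by rw [e x hx, e y hy]
      _ ≤ (x + y) ^ (α * n) / Real.Gamma (α * n + 1) := key_ineq hα hy n hx
      _ = ((x + y) ^ α) ^ n / Real.Gamma (α * n + 1) := by rw [e (x + y) hxy]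
  unfold mittagLeffler
  rw [tsum_mul_tsum_eq_tsum_sum_antidiagonal_of_summable_norm
    (summable_norm_iff.mpr Sx) (summable_norm_iff.mpr Sy)]
  refine Summable.tsum_le_tsum hpt ?_ Sz
  refine Summable.of_nonneg_of_le (fun n => Finset.sum_nonneg fun p _ => ?_) hpt Sz
  have h1 : (0:ℝ) < Real.Gamma (α * p.1 + 1) :=
    Real.Gamma_pos_of_pos (by have := mul_nonneg hα0.le (Nat.cast_nonneg (α := ℝ) p.1); linarith)
  have h2 : (0:ℝ) < Real.Gamma (α * p.2 + 1) :=
    Real.Gamma_pos_of_pos (by have := mul_nonneg hα0.le (Nat.cast_nonneg (α := ℝ) p.2); linarith)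
  exact mul_nonneg (div_nonneg (pow_nonneg (Real.rpow_nonneg hx α) _) h1.le)
    (div_nonneg (pow_nonneg (Real.rpow_nonneg hy α) _) h2.le)
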